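/- If a metric space X admits a quasi-isometric embedding into a product Y × Z of metric spaces, then asdim(X) ≤ asdim(Y) + asdim(Z). -/

import Mathlib

open Metric Set

/-- `AsdimLEd d n`: the space with distance function `d` has asymptotic dimension
at most `n`: for every `R > 0` there is a cover by sets of diameter uniformly
bounded by some `B` such that every `R`-ball meets at most `n+1` members. -/
def AsdimLEd {X : Type*} (d : X → X → ℝ) (n : ℕ) : Prop :=
  ∀ R : ℝ, 0 < R → ∃ (𝒰 : Set (Set X)) (B : ℝ),
    (∀ x : X, ∃ u ∈ 𝒰, x ∈ u) ∧
    (∀ u ∈ 𝒰, ∀ x ∈ u, ∀ y ∈ u, d x y ≤ B) ∧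
    (∀ x : X, {u | u ∈ 𝒰 ∧ ∃ y ∈ u, d x y < R}.Finite ∧
      {u | u ∈ 𝒰 ∧ ∃ y ∈ u, d x y < R}.ncard ≤ n + 1)

/-- Asymptotic dimension at most `n` of a (pseudo)metric space. -/
def AsdimLE (X : Type*) [PseudoMetricSpace X] (n : ℕ) : Prop :=
  AsdimLEd (fun x y : X => dist x y) n

/-- `f` is an `(L,C)`-quasi-isometric embedding. -/
def IsQIE {X Y : Type*} [PseudoMetricSpace X] [PseudoMetricSpace Y]
    (f : X → Y) (L C : ℝ) : Prop :=
  ∀ x x' : X, dist x x' / L - C ≤ dist (f x) (f x') ∧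
    dist (f x) (f x') ≤ L * dist x x' + C

private lemma abs_phi_sub {Y : Type*} [PseudoMetricSpace Y] (rs : ℝ) (U : Set Y)
    (y y' : Y) : |max (rs - infDist y U) 0 - max (rs - infDist y' U) 0| ≤ dist y y' := by
  have h1 : infDist y U ≤ infDist y' U + dist y y' := infDist_le_infDist_add_dist
  have h2 : infDist y' U ≤ infDist y U + dist y y' := by
    simpa [dist_comm] using (infDist_le_infDist_add_dist (x := y') (y := y) (s := U))
  have habs : |(rs - infDist y U) - (rs - infDist y' U)| ≤ dist y y' := by
    rw [abs_sub_le_iff]; constructor <;> linarith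
  exact le_trans (abs_max_sub_max_le_abs _ _ _) habs

/-- Pulling back an asymptotic-dimension bound along a quasi-isometric embedding. -/
private lemma asdimLE_pullback {X W : Type*} [PseudoMetricSpace X] [PseudoMetricSpace W]
    (f : X → W) (L C : ℝ) (hL : 1 ≤ L) (hC : 0 ≤ C) (hf : IsQIE f L C) (k : ℕ)
    (h : AsdimLE W k) : AsdimLE X k := by
  simp only [AsdimLE, AsdimLEd] at *
  intro R hR
  have hL0 : (0:ℝ) < L := lt_of_lt_of_le one_pos hL
  have hR'' : (0:ℝ) < L * R + C + 1 := by nlinarith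
  obtain ⟨𝒲, B, hcov, hbdd, hmult⟩ := h (L * R + C + 1) hR''
  refine ⟨(fun S => f ⁻¹' S) '' 𝒲, L * (B + C), ?_, ?_, ?_⟩
  · intro x
    obtain ⟨S, hS, hxS⟩ := hcov (f x)
    exact ⟨f ⁻¹' S, ⟨S, hS, rfl⟩, hxS⟩
  · rintro u ⟨S, hS, rfl⟩ x hx x' hx'
    have h1 := (hf x x').1
    have h2 : dist (f x) (f x') ≤ B := hbdd S hS _ hx _ hx'
    have h3 : dist x x' / L ≤ B + C := by linarith
    calc dist x x' = dist x x' / L * L := by field_simp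
      _ ≤ (B + C) * L := mul_le_mul_of_nonneg_right h3 hL0.le
      _ = L * (B + C) := mul_comm _ _
  · intro x
    obtain ⟨hfin, hcard⟩ := hmult (f x)
    have hsub : {u | u ∈ (fun S => f ⁻¹' S) '' 𝒲 ∧ ∃ y ∈ u, dist x y < R} ⊆
        (fun S => f ⁻¹' S) '' {S | S ∈ 𝒲 ∧ ∃ y ∈ S, dist (f x) y < L * R + C + 1} := by
      rintro u ⟨⟨S, hS, rfl⟩, p, hp, hdp⟩
      refine ⟨S, ⟨hS, f p, hp, ?_⟩, rfl⟩
      have h4 := (hf x p).2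
      have h5 : L * dist x p < L * R := mul_lt_mul_of_pos_left hdp hL0
      linarith
    exact ⟨(hfin.image _).subset hsub,
      le_trans (Set.ncard_le_ncard hsub (hfin.image _))
        (le_trans (Set.ncard_image_le hfin) hcard)⟩

/-- Product theorem for asymptotic dimension (sup metric on the product). -/
private lemma asdimLE_prod {Y Z : Type*} [PseudoMetricSpace Y] [PseudoMetricSpace Z]
    {m n : ℕ} (hY : AsdimLE Y m) (hZ : AsdimLE Z n) : AsdimLE (Y × Z) (m + n) := by
  simp only [AsdimLE, AsdimLEd] at *
  intro R hR
  classical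
  set N : ℕ := m + n + 1 with hN
  set r : ℝ := 2 * R with hr
  have hrpos : 0 < r := by positivity
  set rs : ℝ := ((N : ℝ) + 1) * (r + 1) with hrs
  have hrspos : 0 < rs := by positivity
  obtain ⟨𝒰, BY, hcovY, hbddY, hmultY⟩ := hY rs hrspos
  obtain ⟨𝒱, BZ, hcovZ, hbddZ, hmultZ⟩ := hZ rs hrspos
  set φ : Set Y → Y → ℝ := fun U y => max (rs - infDist y U) 0 with hφ
  set ψ : Set Z → Z → ℝ := fun V z => max (rs - infDist z V) 0 with hψ
  set θ : Set Y × Set Z → Y × Z → ℝ := fun w x => min (φ w.1 x.1) (ψ w.2 x.2) with hθ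
  set P : Set (Set Y × Set Z) :=
    {w | (w.1 ∈ 𝒰 ∧ w.1.Nonempty) ∧ (w.2 ∈ 𝒱 ∧ w.2.Nonempty)} with hP
  set c : ℕ → ℝ := fun j => ((N : ℝ) - j) * (r + 1) with hc
  set Wset : ℕ → Set (Set Y × Set Z) → Set (Y × Z) := fun j σ =>
    {x | (∀ w ∈ σ, c j + r < θ w x) ∧ ∀ w ∈ P \ σ, θ w x ≤ c j} with hWset
  -- basic facts about the thresholds
  have hcpos : ∀ j, j < N → r + 1 ≤ c j := by
    intro j hj
    have hj' : (j : ℝ) + 1 ≤ (N : ℝ) := by exact_mod_cast Nat.succ_le_of_lt hj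
    have : (1 : ℝ) ≤ (N : ℝ) - j := by linarith
    have := mul_le_mul_of_nonneg_right this (by linarith : (0:ℝ) ≤ r + 1)
    simpa [hc] using this
  have hcub : ∀ j, j < N → c j + r < rs := by
    intro j hj
    have hj0 : (0 : ℝ) ≤ (j : ℝ) := Nat.cast_nonneg j
    have h1 : (N : ℝ) - j ≤ (N : ℝ) := by linarith
    have h2 : c j ≤ (N : ℝ) * (r + 1) :=
      mul_le_mul_of_nonneg_right h1 (by linarith : (0:ℝ) ≤ r + 1)
    have : rs = (N : ℝ) * (r + 1) + (r + 1) := by rw [hrs]; ring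
    linarith
  -- θ is 1-Lipschitz
  have hθlip : ∀ w (x x' : Y × Z), |θ w x - θ w x'| ≤ dist x x' := by
    intro w x x'
    have h1 : |φ w.1 x.1 - φ w.1 x'.1| ≤ dist x x' :=
      le_trans (abs_phi_sub rs w.1 x.1 x'.1) (by rw [Prod.dist_eq]; exact le_max_left _ _)
    have h2 : |ψ w.2 x.2 - ψ w.2 x'.2| ≤ dist x x' :=
      le_trans (abs_phi_sub rs w.2 x.2 x'.2) (by rw [Prod.dist_eq]; exact le_max_right _ _)
    exact le_trans (abs_min_sub_min_le_max _ _ _ _) (max_le h1 h2)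
  -- separation of distinct same-level pieces
  have hsep : ∀ j (σ σ' : Set (Set Y × Set Z)), σ ⊆ P → σ' ⊆ P → σ ≠ σ' →
      ∀ p ∈ Wset j σ, ∀ p' ∈ Wset j σ', r < dist p p' := by
    intro j σ σ' hσ hσ' hne p hp p' hp'
    have hdiff : (∃ w, w ∈ σ ∧ w ∉ σ') ∨ (∃ w, w ∈ σ' ∧ w ∉ σ) := by
      by_contra hcon
      push_neg at hcon
      exact hne (Set.Subset.antisymm hcon.1 hcon.2)
    rcases hdiff with ⟨w, hwσ, hwσ'⟩ | ⟨w, hwσ', hwσ⟩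
    · have h1 : c j + r < θ w p := hp.1 w hwσ
      have h2 : θ w p' ≤ c j := hp'.2 w ⟨hσ hwσ, hwσ'⟩
      have h3 := le_trans (le_abs_self _) (hθlip w p p')
      linarith
    · have h1 : c j + r < θ w p' := hp'.1 w hwσ'
      have h2 : θ w p ≤ c j := hp.2 w ⟨hσ' hwσ', hwσ⟩
      have h3 := le_trans (le_abs_self _) (hθlip w p' p)
      rw [dist_comm p p']
      linarith
  refine ⟨{S | ∃ j σ, (j < N ∧ σ ⊆ P ∧ σ.Nonempty) ∧ S = Wset j σ},
    max BY BZ + 2 * rs, ?_, ?_, ?_⟩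
  · -- covering
    intro x
    obtain ⟨U₀, hU₀𝒰, hyU₀⟩ := hcovY x.1
    obtain ⟨V₀, hV₀𝒱, hzV₀⟩ := hcovZ x.2
    have hU₀ne : U₀.Nonempty := ⟨x.1, hyU₀⟩
    have hV₀ne : V₀.Nonempty := ⟨x.2, hzV₀⟩
    have hφU₀ : φ U₀ x.1 = rs := by
      simp [hφ, infDist_zero_of_mem hyU₀, max_eq_left hrspos.le]
    have hψV₀ : ψ V₀ x.2 = rs := by
      simp [hψ, infDist_zero_of_mem hzV₀, max_eq_left hrspos.le]
    obtain ⟨hTYfin, hTYcard⟩ := hmultY x.1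
    obtain ⟨hTZfin, hTZcard⟩ := hmultZ x.2
    set TY : Set (Set Y) := {u | u ∈ 𝒰 ∧ ∃ p ∈ u, dist x.1 p < rs} with hTY
    set TZ : Set (Set Z) := {v | v ∈ 𝒱 ∧ ∃ p ∈ v, dist x.2 p < rs} with hTZ
    set Φ : Set ℝ := (fun u => φ u x.1) '' TY with hΦ
    set Ψ : Set ℝ := (fun v => ψ v x.2) '' TZ with hΨ
    have hrsΦ : rs ∈ Φ :=
      ⟨U₀, ⟨hU₀𝒰, x.1, hyU₀, by simpa using hrspos⟩, hφU₀⟩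
    have hrsΨ : rs ∈ Ψ :=
      ⟨V₀, ⟨hV₀𝒱, x.2, hzV₀, by simpa using hrspos⟩, hψV₀⟩
    have hΦfin : Φ.Finite := hTYfin.image _
    have hΨfin : Ψ.Finite := hTZfin.image _
    set S : Set ℝ := (Φ \ {rs}) ∪ (Ψ \ {rs}) with hS
    have hSfin : S.Finite := hΦfin.diff.union hΨfin.diff
    have hScard : S.ncard ≤ m + n := by
      have h1 : (Φ \ {rs}).ncard = Φ.ncard - 1 := Set.ncard_diff_singleton_of_mem hrsΦ
      have h2 : (Ψ \ {rs}).ncard = Ψ.ncard - 1 := Set.ncard_diff_singleton_of_mem hrsΨ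
      have h3 : Φ.ncard ≤ m + 1 := le_trans (Set.ncard_image_le hTYfin) hTYcard
      have h4 : Ψ.ncard ≤ n + 1 := le_trans (Set.ncard_image_le hTZfin) hTZcard
      have h5 := Set.ncard_union_le (Φ \ {rs}) (Ψ \ {rs})
      rw [← hS] at h5
      omega
    -- any obstructing value lies in S
    have hvalS : ∀ w ∈ P, ∀ j, j < N → θ w x ∈ Set.Ioc (c j) (c j + r) → θ w x ∈ S := by
      intro w hwP j hj hIoc
      have hcj : (0:ℝ) < c j := lt_of_lt_of_le (by linarith) (hcpos j hj)
      have hlt : θ w x < rs := lt_of_le_of_lt hIoc.2 (hcub j hj)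
      obtain ⟨⟨hU𝒰, hUne⟩, hV𝒱, hVne⟩ := hwP
      rcases min_cases (φ w.1 x.1) (ψ w.2 x.2) with ⟨heq, _⟩ | ⟨heq, _⟩
      · have hθeq : θ w x = φ w.1 x.1 := heq
        have hpos : 0 < φ w.1 x.1 := by rw [← hθeq]; exact lt_trans hcj hIoc.1
        have hid : infDist x.1 w.1 < rs := by simpa [hφ] using hpos
        have hmem : w.1 ∈ TY := ⟨hU𝒰, (infDist_lt_iff hUne).mp hid⟩
        rw [hS]
        refine Or.inl ⟨⟨w.1, hmem, hθeq.symm⟩, ?_⟩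
        simp only [Set.mem_singleton_iff]
        exact hlt.ne
      · have hθeq : θ w x = ψ w.2 x.2 := heq
        have hpos : 0 < ψ w.2 x.2 := by rw [← hθeq]; exact lt_trans hcj hIoc.1
        have hid : infDist x.2 w.2 < rs := by simpa [hψ] using hpos
        have hmem : w.2 ∈ TZ := ⟨hV𝒱, (infDist_lt_iff hVne).mp hid⟩
        rw [hS]
        refine Or.inr ⟨⟨w.2, hmem, hθeq.symm⟩, ?_⟩
        simp only [Set.mem_singleton_iff]
        exact hlt.ne
    -- pigeonhole: some level j has no obstructing value
    have hkey : ∃ j, j < N ∧ ∀ w ∈ P, θ w x ∉ Set.Ioc (c j) (c j + r) := by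
      by_contra hcon
      push_neg at hcon
      have h2 : ∀ j : ℕ, ∃ v : ℝ, j < N → v ∈ S ∧ v ∈ Set.Ioc (c j) (c j + r) := by
        intro j
        by_cases hj : j < N
        · obtain ⟨w, hwP, hIoc⟩ := hcon j hj
          exact ⟨θ w x, fun _ => ⟨hvalS w hwP j hj hIoc, hIoc⟩⟩
        · exact ⟨0, fun h => absurd h hj⟩
      choose v hv using h2
      have hmono : ∀ {a b : ℕ}, a < b → b < N → c b + r < c a := by
        intro a b hab hbN
        have h1 : (a : ℝ) + 1 ≤ (b : ℝ) := by exact_mod_cast Nat.succ_le_of_lt hab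
        have : c a - c b = ((b : ℝ) - a) * (r + 1) := by rw [hc]; ring
        nlinarith
      have hinj : Set.InjOn v (Finset.range N : Set ℕ) := by
        intro j hj j' hj' hvv
        simp only [Finset.coe_range, Set.mem_Iio] at hj hj'
        by_contra hne
        have h1 := (hv j hj).2
        have h2 := (hv j' hj').2
        rcases lt_or_gt_of_ne hne with h | h
        · have h3 := hmono h hj'
          linarith [h1.1, h2.2]
        · have h3 := hmono h hj
          linarith [h2.1, h1.2]
      have hcard := Finset.card_le_card_of_injOn v
        (fun j hj => by
          have hjN : j < N := Finset.mem_range.mp hj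
          exact hSfin.mem_toFinset.mpr (hv j hjN).1) hinj
      rw [Finset.card_range, ← Set.ncard_eq_toFinset_card S hSfin] at hcard
      omega
    obtain ⟨j, hjN, hgood⟩ := hkey
    refine ⟨Wset j {w | w ∈ P ∧ c j + r < θ w x},
      ⟨j, {w | w ∈ P ∧ c j + r < θ w x},
        ⟨hjN, fun w hw => hw.1, ⟨(U₀, V₀), ⟨⟨hU₀𝒰, hU₀ne⟩, hV₀𝒱, hV₀ne⟩, ?_⟩⟩, rfl⟩,
      ?_, ?_⟩
    · -- θ (U₀, V₀) x = rs > c j + r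
      have : θ (U₀, V₀) x = rs := by simp [hθ, hφU₀, hψV₀]
      rw [this]
      exact hcub j hjN
    · exact fun w hw => hw.2
    · intro w hw
      have h1 : ¬ (c j + r < θ w x) := fun hlt => hw.2 ⟨hw.1, hlt⟩
      by_contra hle
      push_neg at hle
      exact hgood w hw.1 ⟨hle, not_lt.mp h1⟩
  · -- uniform boundedness
    rintro u ⟨j, σ, ⟨hjN, hσP, w₀, hw₀⟩, rfl⟩ x hx x' hx'
    obtain ⟨⟨hU𝒰, hUne⟩, hV𝒱, hVne⟩ := hσP hw₀
    have hcj : (0:ℝ) < c j := lt_of_lt_of_le (by linarith) (hcpos j hjN)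
    have hbY : ∀ p : Y × Z, p ∈ Wset j σ → ∃ q ∈ w₀.1, dist p.1 q < rs := by
      intro p hp
      have h1 : c j + r < θ w₀ p := hp.1 w₀ hw₀
      have h2 : θ w₀ p ≤ φ w₀.1 p.1 := min_le_left _ _
      have hpos : 0 < φ w₀.1 p.1 := by linarith
      have hid : infDist p.1 w₀.1 < rs := by simpa [hφ] using hpos
      exact (infDist_lt_iff hUne).mp hid
    have hbZ : ∀ p : Y × Z, p ∈ Wset j σ → ∃ q ∈ w₀.2, dist p.2 q < rs := by
      intro p hp
      have h1 : c j + r < θ w₀ p := hp.1 w₀ hw₀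
      have h2 : θ w₀ p ≤ ψ w₀.2 p.2 := min_le_right _ _
      have hpos : 0 < ψ w₀.2 p.2 := by linarith
      have hid : infDist p.2 w₀.2 < rs := by simpa [hψ] using hpos
      exact (infDist_lt_iff hVne).mp hid
    obtain ⟨q, hq, hdq⟩ := hbY x hx
    obtain ⟨q', hq', hdq'⟩ := hbY x' hx'
    obtain ⟨s, hs, hds⟩ := hbZ x hx
    obtain ⟨s', hs', hds'⟩ := hbZ x' hx'
    have hY1 : dist x.1 x'.1 ≤ max BY BZ + 2 * rs := by
      have := dist_triangle4 x.1 q q' x'.1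
      have hqq : dist q q' ≤ BY := hbddY w₀.1 hU𝒰 q hq q' hq'
      have := dist_comm x'.1 q'
      have hb : BY ≤ max BY BZ := le_max_left _ _
      have h5 : dist q' x'.1 = dist x'.1 q' := dist_comm _ _
      linarith [dist_triangle4 x.1 q q' x'.1]
    have hZ1 : dist x.2 x'.2 ≤ max BY BZ + 2 * rs := by
      have hqq : dist s s' ≤ BZ := hbddZ w₀.2 hV𝒱 s hs s' hs'
      have hb : BZ ≤ max BY BZ := le_max_right _ _
      have h5 : dist s' x'.2 = dist x'.2 s' := dist_comm _ _
      linarith [dist_triangle4 x.2 s s' x'.2]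
    show dist x x' ≤ max BY BZ + 2 * rs
    rw [Prod.dist_eq]
    exact max_le hY1 hZ1
  · -- multiplicity
    intro q
    set M : Set (Set (Y × Z)) :=
      {u | u ∈ {S | ∃ j σ, (j < N ∧ σ ⊆ P ∧ σ.Nonempty) ∧ S = Wset j σ} ∧
        ∃ y ∈ u, dist q y < R} with hM
    set g : Set (Y × Z) → ℕ := fun S =>
      if h : ∃ j σ, (j < N ∧ σ ⊆ P ∧ σ.Nonempty) ∧ S = Wset j σ then h.choose else 0
      with hg
    have hMmem : ∀ S, S ∈ M → (∃ j σ, (j < N ∧ σ ⊆ P ∧ σ.Nonempty) ∧ S = Wset j σ) ∧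
        ∃ y ∈ S, dist q y < R := by
      intro S hSM
      rw [hM] at hSM
      exact hSM
    have hgspec : ∀ S ∈ M, ∃ σ, (g S < N ∧ σ ⊆ P ∧ σ.Nonempty) ∧ S = Wset (g S) σ := by
      intro S hSM
      have h : ∃ j σ, (j < N ∧ σ ⊆ P ∧ σ.Nonempty) ∧ S = Wset j σ := (hMmem S hSM).1
      have hgs : g S = h.choose := dif_pos h
      rw [hgs]
      exact h.choose_spec
    have hinj : Set.InjOn g M := by
      intro S hS S' hS' hgg
      obtain ⟨σ, ⟨hjN, hσP, hσne⟩, hSeq⟩ := hgspec S hS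
      obtain ⟨σ', ⟨hjN', hσ'P, hσ'ne⟩, hSeq'⟩ := hgspec S' hS'
      by_cases hσσ : σ = σ'
      · rw [hSeq, hSeq', hσσ, hgg]
      · exfalso
        obtain ⟨p, hp, hdp⟩ := (hMmem S hS).2
        obtain ⟨p', hp', hdp'⟩ := (hMmem S' hS').2
        have hpW : p ∈ Wset (g S) σ := hSeq ▸ hp
        have hpW' : p' ∈ Wset (g S) σ' := by
          rw [hgg]; exact hSeq' ▸ hp'
        have := hsep (g S) σ σ' hσP hσ'P hσσ p hpW p' hpW'
        have hdpp : dist p p' ≤ dist p q + dist q p' := dist_triangle p q p'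
        have h1 : dist p q = dist q p := dist_comm _ _
        linarith
    have hgM : g '' M ⊆ (Finset.range N : Set ℕ) := by
      rintro j ⟨S, hS, rfl⟩
      obtain ⟨σ, ⟨h1, -⟩, -⟩ := hgspec S hS
      simpa using h1
    have hMfin : M.Finite :=
      Set.Finite.of_finite_image ((Finset.range N).finite_toSet.subset hgM) hinj
    refine ⟨hMfin, ?_⟩
    have h1 : M.ncard = (g '' M).ncard := (Set.ncard_image_of_injOn hinj).symm
    have h2 : (g '' M).ncard ≤ (Finset.range N : Set ℕ).ncard :=
      Set.ncard_le_ncard hgM (Finset.range N).finite_toSet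
    rw [Set.ncard_coe_finset, Finset.card_range] at h2
    omega

/-- If `X` quasi-isometrically embeds into a product `Y × Z` (sup metric), then
`asdim X ≤ asdim Y + asdim Z`. -/
theorem asdim_le_of_qie_prod {X Y Z : Type*} [MetricSpace X] [MetricSpace Y]
    [MetricSpace Z] (f : X → Y × Z) (L C : ℝ) (hL : 1 ≤ L) (hC : 0 ≤ C)
    (hf : IsQIE f L C) (m n : ℕ) (hY : AsdimLE Y m) (hZ : AsdimLE Z n) :
    AsdimLE X (m + n) := by
  exact asdimLE_pullback f L C hL hC hf (m + n) (asdimLE_prod hY hZ)
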